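/- Let X be a weighted sequence of length n over a finite alphabet Σ and let z ≥ 1 be real. For every position i with 1 ≤ i ≤ n−1 and every string Q over Σ: Σ_{c∈Σ} ⌊z·P_X(cQ,i)⌋ ≤ ⌊z·P_X(Q,i+1)⌋, where cQ denotes Q prepended by the letter c. -/

import Mathlib

open scoped Classical
open Finset

variable {α : Type*}

/-- Matching probability `P_X(P,i)` of pattern `P` at (1-based) position `i`
in a weighted sequence of length `n` with letter probabilities `p`. -/
def matchProb (n : ℕ) (p : ℕ → α → ℝ) : List α → ℕ → ℝ
  | [], _ => 1
  | c :: P, i => if i ≤ n then p i c * matchProb n p P (i + 1) else 0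

/-- `p` describes a weighted sequence of length `n`: at each position `i ∈ {1,…,n}`
the letter probabilities are nonnegative and sum to 1. -/
def IsWeighted [Fintype α] (n : ℕ) (p : ℕ → α → ℝ) : Prop :=
  ∀ i, 1 ≤ i → i ≤ n → (∀ c, 0 ≤ p i c) ∧ ∑ c, p i c = 1

/-- A property array for strings of length `n`:
`π i ∈ {i-1,…,n}` for `i ∈ {1,…,n}` and `π` is nondecreasing on `{1,…,n}`. -/
def IsPropertyArray (n : ℕ) (π : ℕ → ℕ) : Prop :=
  (∀ i, 1 ≤ i → i ≤ n → i - 1 ≤ π i ∧ π i ≤ n) ∧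
    ∀ i, 1 ≤ i → i + 1 ≤ n → π i ≤ π (i + 1)

/-- The factor `S[i..j]` (1-based, empty when `j < i`). -/
def factor (S : List α) (i j : ℕ) : List α := (S.drop (i - 1)).take (j + 1 - i)

/-- `i ∈ Occ_π(P,S)`: `P = S[i..i+|P|-1]` and `i+|P|-1 ≤ π i`. -/
def occursAt (S : List α) (π : ℕ → ℕ) (P : List α) (i : ℕ) : Prop :=
  factor S i (i + P.length - 1) = P ∧ i + P.length - 1 ≤ π i

/-- `Count_𝒮(P,i)`: number of members of the family in which `P` occurs at `i`
respecting the property. -/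
noncomputable def countOcc {k : ℕ} (S : Fin k → List α) (π : Fin k → ℕ → ℕ)
    (P : List α) (i : ℕ) : ℕ :=
  (Finset.univ.filter fun j => occursAt (S j) (π j) P i).card

/-- `P` is compatible with `Q` if `P = ε` or `P = cQ'` for a letter `c` and a prefix `Q'` of `Q`. -/
def Compatible (P Q : List α) : Prop :=
  P = [] ∨ ∃ (c : α) (Q' : List α), Q' <+: Q ∧ P = c :: Q'

/-- A random string `S : Fin n → α` matches pattern `P` at (1-based) position `i`. -/
def Matches {n : ℕ} (S : Fin n → α) (P : List α) (i : ℕ) : Prop :=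
  ((List.ofFn S).drop (i - 1)).take P.length = P

/-- The probability of the outcome `S` under the product distribution determined by `p`. -/
def strWeight (n : ℕ) (p : ℕ → α → ℝ) (S : Fin n → α) : ℝ :=
  ∏ j : Fin n, p ((j : ℕ) + 1) (S j)

/-- `Σ_{c∈Σ} ⌊z·P_X(cQ,i)⌋ ≤ ⌊z·P_X(Q,i+1)⌋`. -/
theorem sum_floor_prepend_le [Fintype α]
    (n : ℕ) (p : ℕ → α → ℝ) (hp : IsWeighted n p) (z : ℝ) (hz : 1 ≤ z) :
    ∀ (i : ℕ), 1 ≤ i → i + 1 ≤ n → ∀ Q : List α,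
      ∑ c : α, ⌊z * matchProb n p (c :: Q) i⌋ ≤ ⌊z * matchProb n p Q (i + 1)⌋ := by
  intro i hi hin Q
  have hiKn : i ≤ n := le_trans (Nat.le_succ i) hin
  -- matchProb is nonnegative
  have hnonneg : ∀ (Q : List α) (j : ℕ), 1 ≤ j → 0 ≤ matchProb n p Q j := by
    intro Q
    induction Q with
    | nil => intro j hj; simp [matchProb]
    | cons c P ih =>
      intro j hj
      simp only [matchProb]
      split
      · exact mul_nonneg ((hp j hj (by assumption)).1 c) (ih (j+1) (by omega))
      · exact le_refl 0
  set M := matchProb n p Q (i + 1) with hM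
  have hMnn : 0 ≤ M := hnonneg Q (i+1) (by omega)
  have hrw : ∀ c : α, matchProb n p (c :: Q) i = p i c * M := by
    intro c; simp [matchProb, hiKn, hM]
  have hsum : ∑ c : α, z * (p i c * M) = z * M := by
    rw [← Finset.mul_sum]
    have : ∑ c : α, p i c * M = (∑ c : α, p i c) * M := by
      rw [Finset.sum_mul]
    rw [this, (hp i hi hiKn).2, one_mul]
  have key : (↑(∑ c : α, ⌊z * (p i c * M)⌋) : ℝ) ≤ z * M := by
    rw [← hsum]
    push_cast
    exact Finset.sum_le_sum fun c _ => Int.floor_le _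
  calc ∑ c : α, ⌊z * matchProb n p (c :: Q) i⌋
      = ∑ c : α, ⌊z * (p i c * M)⌋ := by simp_rw [hrw]
    _ ≤ ⌊z * M⌋ := Int.le_floor.mpr key
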